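/- Let G be the Cartesian product of graphs G_i (i ∈ I), and for each i let R_i be an equivalence relation on E(G_i). Define R on E(G) by: (e,f) ∈ R iff e and f are edges of the same factor direction j and (p_j(e), p_j(f)) ∈ R_j. Then R is an RSP-relation on E(G) if and only if each R_i is an RSP-relation on E(G_i). -/

import Mathlib

open SimpleGraph

variable {V : Type*}

/-- An equivalence relation on a set `E` of edges: reflexive on `E`, symmetric, transitive,
and only relating elements of `E`. -/
structure IsEquivOn (R : Sym2 V → Sym2 V → Prop) (E : Set (Sym2 V)) : Prop where
  refl : ∀ e ∈ E, R e e
  symm : ∀ {e f}, R e f → R f e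
  trans : ∀ {e f g}, R e f → R f g → R e g
  mem_left : ∀ {e f}, R e f → e ∈ E
  mem_right : ∀ {e f}, R e f → f ∈ E

/-- `R` is an RSP-relation on `G`: an equivalence relation on `E(G)` such that any two adjacent
edges in distinct classes span a square (4-cycle) with opposite edges in the same class. -/
def IsRSP (G : SimpleGraph V) (R : Sym2 V → Sym2 V → Prop) : Prop :=
  IsEquivOn R G.edgeSet ∧
  ∀ x y z : V, G.Adj x y → G.Adj x z → y ≠ z → ¬ R s(x, y) s(x, z) →
    ∃ w : V, w ≠ x ∧ w ≠ y ∧ w ≠ z ∧ G.Adj y w ∧ G.Adj z w ∧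
      R s(x, y) s(z, w) ∧ R s(x, z) s(y, w)

/-- A finest RSP-relation: an RSP-relation such that every finer RSP-relation coincides
with it. -/
def IsFinestRSP (G : SimpleGraph V) (R : Sym2 V → Sym2 V → Prop) : Prop :=
  IsRSP G R ∧ ∀ S : Sym2 V → Sym2 V → Prop, IsRSP G S →
    (∀ e f, S e f → R e f) → (∀ e f, R e f → S e f)

/-- The Cartesian product of an indexed family of simple graphs. -/
def cartProd {I : Type*} {W : I → Type*} (G : ∀ i, SimpleGraph (W i)) :
    SimpleGraph (∀ i, W i) where
  Adj x y := ∃ j, (G j).Adj (x j) (y j) ∧ ∀ i, i ≠ j → x i = y i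
  symm := by
    constructor
    rintro x y ⟨j, h1, h2⟩
    exact ⟨j, h1.symm, fun i hi => (h2 i hi).symm⟩
  loopless := by
    constructor
    rintro x ⟨j, h1, -⟩
    exact (G j).loopless.irrefl _ h1

/-- The product relation `□ᵢ Rᵢ` on the edge set of a Cartesian product: two edges are
related iff they belong to the same factor direction `j` and their `j`-projections are
related by `Rⱼ`. -/
def prodRel {I : Type*} {W : I → Type*} (G : ∀ i, SimpleGraph (W i))
    (Rel : ∀ i, Sym2 (W i) → Sym2 (W i) → Prop)
    (e f : Sym2 (∀ i, W i)) : Prop :=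
  ∃ j, ∃ x y u v : ∀ i, W i, e = s(x, y) ∧ f = s(u, v) ∧
    (G j).Adj (x j) (y j) ∧ (∀ i, i ≠ j → x i = y i) ∧
    (G j).Adj (u j) (v j) ∧ (∀ i, i ≠ j → u i = v i) ∧
    Rel j s(x j, y j) s(u j, v j)

private lemma edge_dir' {I : Type} {W : I → Type} {X Y U V : ∀ i, W i} {j k : I}
    (hXY : ∀ i, i ≠ j → X i = Y i) (hne : U k ≠ V k)
    (h : s(X, Y) = s(U, V)) :
    j = k ∧ s(U j, V j) = s(X j, Y j) ∧ (∀ i, i ≠ j → U i = V i) ∧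
      (∀ i, i ≠ j → U i = X i) := by
  rcases Sym2.eq_iff.mp h with ⟨h1, h2⟩ | ⟨h1, h2⟩
  · subst h1; subst h2
    refine ⟨?_, rfl, hXY, fun i _ => rfl⟩
    by_contra hk; exact hne (hXY k (fun h => hk h.symm))
  · subst h1; subst h2
    refine ⟨?_, Sym2.eq_swap, fun i hi => (hXY i hi).symm, fun i hi => (hXY i hi).symm⟩
    by_contra hk; exact hne (hXY k (fun h => hk h.symm)).symm

private lemma snd_edge {I : Type} {W : I → Type} {i0 : I} {T Wv U V : ∀ i, W i}
    (hUV : ∀ i, i ≠ i0 → U i = V i) (hf : s(T, Wv) = s(U, V)) :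
    s(U i0, V i0) = s(T i0, Wv i0) ∧ ∀ i, i ≠ i0 → Wv i = T i := by
  rcases Sym2.eq_iff.mp hf with ⟨h1, h2⟩ | ⟨h1, h2⟩
  · subst h1; subst h2; exact ⟨rfl, fun i hi => (hUV i hi).symm⟩
  · subst h1; subst h2; exact ⟨Sym2.eq_swap, fun i hi => hUV i hi⟩

/-- The product of equivalence relations on the factors of a Cartesian product is an
RSP-relation iff each factor relation is an RSP-relation. -/
theorem stmt5 {I : Type} [Fintype I] {W : I → Type} [∀ i, Fintype (W i)]
    (G : ∀ i, SimpleGraph (W i)) (hconn : ∀ i, (G i).Connected)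
    (Rel : ∀ i, Sym2 (W i) → Sym2 (W i) → Prop)
    (hequiv : ∀ i, IsEquivOn (Rel i) (G i).edgeSet) :
    IsRSP (cartProd G) (prodRel G Rel) ↔ ∀ i, IsRSP (G i) (Rel i) := by
  classical
  constructor
  · -- forward direction
    intro hP i0
    refine ⟨hequiv i0, ?_⟩
    intro x y z hxy hxz hyz hnR
    have hnonempty : ∀ i, Nonempty (W i) := fun i => (hconn i).nonempty
    set b : ∀ i, W i := fun i => (hnonempty i).some with hb
    set upd : W i0 → ∀ i, W i := fun a => Function.update b i0 a with hupd
    have hv : ∀ a : W i0, upd a i0 = a := fun a => Function.update_self i0 a b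
    have ho : ∀ (a : W i0) (i), i ≠ i0 → upd a i = b i :=
      fun a i hi => Function.update_of_ne hi a b
    have hoff : ∀ (a c : W i0) (i), i ≠ i0 → upd a i = upd c i :=
      fun a c i hi => by rw [ho a i hi, ho c i hi]
    have hAdj : ∀ a c : W i0, (G i0).Adj a c → (cartProd G).Adj (upd a) (upd c) :=
      fun a c h => ⟨i0, by rw [hv, hv]; exact h, hoff a c⟩
    have hnR' : ¬ prodRel G Rel s(upd x, upd y) s(upd x, upd z) := by
      rintro ⟨j, x', y', u', v', he, hf, ha1, ho1, ha2, ho2, hrel⟩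
      obtain ⟨hj, hp1, -, -⟩ := edge_dir' (hoff x y) ha1.ne he
      subst hj
      obtain ⟨-, hp2, -, -⟩ := edge_dir' (hoff x z) ha2.ne hf
      rw [hp1, hp2] at hrel
      simp only [hv] at hrel
      exact hnR hrel
    have hYZ : upd y ≠ upd z := fun h => hyz (by rw [← hv y, ← hv z, h])
    obtain ⟨Wv, hW1, hW2, hW3, hAYW, hAZW, hP1, hP2⟩ :=
      hP.2 (upd x) (upd y) (upd z) (hAdj x y hxy) (hAdj x z hxz) hYZ hnR'
    obtain ⟨j, x', y', u', v', he, hf, ha1, ho1, ha2, ho2, hrel⟩ := hP1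
    obtain ⟨hj, hp1, -, -⟩ := edge_dir' (hoff x y) ha1.ne he
    subst hj
    obtain ⟨hp2, hWb⟩ := snd_edge ho2 hf
    rw [hp1, hp2] at hrel
    simp only [hv] at hrel
    obtain ⟨j2, x2, y2, u2, v2, he2, hf2, hb1, hb1o, hb2, hb2o, hrel2⟩ := hP2
    obtain ⟨hj2, hq1, -, -⟩ := edge_dir' (hoff x z) hb1.ne he2
    subst hj2
    obtain ⟨hq2, hWb2⟩ := snd_edge hb2o hf2
    rw [hq1, hq2] at hrel2
    simp only [hv] at hrel2
    obtain ⟨jy, hay, hoy⟩ := hAYW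
    have hjy : i0 = jy := by
      by_contra hk
      have hk' : jy ≠ i0 := fun h => hk h.symm
      exact hay.ne (by rw [ho y jy hk', hWb jy hk', ho z jy hk'])
    subst hjy
    rw [hv] at hay
    obtain ⟨jz, haz, hoz⟩ := hAZW
    have hjz : i0 = jz := by
      by_contra hk
      have hk' : jz ≠ i0 := fun h => hk h.symm
      exact haz.ne (by rw [ho z jz hk', hWb jz hk', ho z jz hk'])
    subst hjz
    rw [hv] at haz
    have hWeq : ∀ a : W i0, Wv i0 = a → Wv = upd a := by
      intro a hwa; funext i
      by_cases hi : i = i0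
      · subst hi; rw [hv]; exact hwa
      · rw [hWb i hi, ho z i hi, ho a i hi]
    exact ⟨Wv i0, fun h => hW1 (hWeq x h), fun h => hW2 (hWeq y h),
      fun h => hW3 (hWeq z h), hay, haz, hrel, hrel2⟩
  · -- backward direction
    intro hall
    constructor
    · constructor
      · intro e he
        induction e using Sym2.ind with
        | _ a c =>
          obtain ⟨j, hadj, hoff⟩ := (cartProd G).mem_edgeSet.mp he
          exact ⟨j, a, c, a, c, rfl, rfl, hadj, hoff, hadj, hoff,
            (hequiv j).refl _ ((G j).mem_edgeSet.mpr hadj)⟩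
      · rintro e f ⟨j, x, y, u, v, he, hf, a1, o1, a2, o2, hrel⟩
        exact ⟨j, u, v, x, y, hf, he, a2, o2, a1, o1, (hequiv j).symm hrel⟩
      · rintro e f g ⟨j, x, y, u, v, he, hf, a1, o1, a2, o2, hrel⟩
          ⟨j', x', y', u', v', hf', hg, a1', o1', a2', o2', hrel'⟩
        obtain ⟨hj, hp, -, -⟩ := edge_dir' o2 a1'.ne (hf.symm.trans hf')
        subst hj
        rw [hp] at hrel'
        exact ⟨j, x, y, u', v', he, hg, a1, o1, a2', o2',
          (hequiv j).trans hrel hrel'⟩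
      · rintro e f ⟨j, x, y, u, v, he, hf, a1, o1, -, -, -⟩
        rw [he]; exact (cartProd G).mem_edgeSet.mpr ⟨j, a1, o1⟩
      · rintro e f ⟨j, x, y, u, v, he, hf, -, -, a2, o2, -⟩
        rw [hf]; exact (cartProd G).mem_edgeSet.mpr ⟨j, a2, o2⟩
    · intro X Y Z hXY hXZ hYZ hnR
      obtain ⟨j1, a1, o1⟩ := hXY
      obtain ⟨j2, a2, o2⟩ := hXZ
      by_cases hj : j1 = j2
      · subst hj
        have hyz : Y j1 ≠ Z j1 := by
          intro h
          apply hYZ; funext i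
          by_cases hi : i = j1
          · subst hi; exact h
          · rw [← o1 i hi, ← o2 i hi]
        have hnR' : ¬ Rel j1 s(X j1, Y j1) s(X j1, Z j1) := fun h =>
          hnR ⟨j1, X, Y, X, Z, rfl, rfl, a1, o1, a2, o2, h⟩
        obtain ⟨w, hw1, hw2, hw3, hyw, hzw, r1, r2⟩ :=
          (hall j1).2 (X j1) (Y j1) (Z j1) a1 a2 hyz hnR'
        refine ⟨Function.update X j1 w, ?_, ?_, ?_, ?_, ?_, ?_, ?_⟩
        · intro h; exact hw1 (by simpa using congrFun h j1)
        · intro h; exact hw2 (by simpa using congrFun h j1)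
        · intro h; exact hw3 (by simpa using congrFun h j1)
        · exact ⟨j1, by rw [Function.update_self]; exact hyw,
            fun i hi => by rw [Function.update_of_ne hi]; exact (o1 i hi).symm⟩
        · exact ⟨j1, by rw [Function.update_self]; exact hzw,
            fun i hi => by rw [Function.update_of_ne hi]; exact (o2 i hi).symm⟩
        · refine ⟨j1, X, Y, Z, Function.update X j1 w, rfl, rfl, a1, o1, ?_, ?_, ?_⟩
          · rw [Function.update_self]; exact hzw
          · intro i hi; rw [Function.update_of_ne hi]; exact (o2 i hi).symm
          · rw [Function.update_self]; exact r1
        · refine ⟨j1, X, Z, Y, Function.update X j1 w, rfl, rfl, a2, o2, ?_, ?_, ?_⟩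
          · rw [Function.update_self]; exact hyw
          · intro i hi; rw [Function.update_of_ne hi]; exact (o1 i hi).symm
          · rw [Function.update_self]; exact r2
      · set Wv := Function.update (Function.update X j1 (Y j1)) j2 (Z j2) with hWvdef
        have hW1 : Wv j1 = Y j1 := by
          rw [hWvdef, Function.update_of_ne hj, Function.update_self]
        have hW2 : Wv j2 = Z j2 := by rw [hWvdef, Function.update_self]
        have hWo : ∀ i, i ≠ j1 → i ≠ j2 → Wv i = X i := fun i h1 h2 => by
          rw [hWvdef, Function.update_of_ne h2, Function.update_of_ne h1]
        have hXj2Y : Y j2 = X j2 := (o1 j2 (Ne.symm hj)).symm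
        have hXj1Z : Z j1 = X j1 := (o2 j1 hj).symm
        refine ⟨Wv, ?_, ?_, ?_, ?_, ?_, ?_, ?_⟩
        · intro h; exact a1.ne' (hW1 ▸ congrFun h j1)
        · intro h
          exact a2.ne' ((hW2 ▸ congrFun h j2).trans hXj2Y)
        · intro h
          exact a1.ne (((hW1 ▸ congrFun h j1).trans hXj1Z).symm)
        · refine ⟨j2, ?_, ?_⟩
          · rw [hW2, hXj2Y]; exact a2
          · intro i hi; by_cases hi1 : i = j1
            · subst hi1; rw [hW1]
            · rw [hWo i hi1 hi]; exact (o1 i hi1).symm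
        · refine ⟨j1, ?_, ?_⟩
          · rw [hW1, hXj1Z]; exact a1
          · intro i hi; by_cases hi2 : i = j2
            · subst hi2; rw [hW2]
            · rw [hWo i hi hi2]; exact (o2 i hi2).symm
        · refine ⟨j1, X, Y, Z, Wv, rfl, rfl, a1, o1, ?_, ?_, ?_⟩
          · rw [hW1, hXj1Z]; exact a1
          · intro i hi; by_cases hi2 : i = j2
            · subst hi2; rw [hW2]
            · rw [hWo i hi hi2]; exact (o2 i hi2).symm
          · rw [hW1, hXj1Z]
            exact (hequiv j1).refl _ ((G j1).mem_edgeSet.mpr a1)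
        · refine ⟨j2, X, Z, Y, Wv, rfl, rfl, a2, o2, ?_, ?_, ?_⟩
          · rw [hW2, hXj2Y]; exact a2
          · intro i hi; by_cases hi1 : i = j1
            · subst hi1; rw [hW1]
            · rw [hWo i hi1 hi]; exact (o1 i hi1).symm
          · rw [hW2, hXj2Y]
            exact (hequiv j2).refl _ ((G j2).mem_edgeSet.mpr a2)
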